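/- The determinant is the minimal CH-norm on the matrix algebra M_n(F) over an infinite field F. -/

import Mathlib

open TensorProduct

variable {F R ι : Type*}

/-- The polynomial function on `R` attached to a polynomial in the coordinates
along the basis `b`. -/
noncomputable def polyFun [Field F] [Ring R] [Algebra F R] [Fintype ι]
    (b : Module.Basis ι F R) (p : MvPolynomial ι F) : R → F :=
  fun r => MvPolynomial.eval (fun i => b.repr r i) p

/-- The abstract characteristic polynomial `χ_a(t) = N(t·1 - a)` of an element `a`,
for the polynomial map attached to `p`. -/
noncomputable def charPolyOf [Field F] [Ring R] [Algebra F R] [Fintype ι]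
    (b : Module.Basis ι F R) (p : MvPolynomial ι F) (a : R) : Polynomial F :=
  MvPolynomial.aeval
    (fun i => Polynomial.C (b.repr 1 i) * Polynomial.X - Polynomial.C (b.repr a i)) p

/-- `p` defines a Cayley–Hamilton norm of degree `n` on `R` (w.r.t. the basis `b`):
homogeneous of degree `n`, multiplicative, and every element satisfies its abstract
characteristic polynomial. -/
structure IsCHNorm [Field F] [Ring R] [Algebra F R] [Fintype ι]
    (b : Module.Basis ι F R) (n : ℕ) (p : MvPolynomial ι F) : Prop where
  homog : ∀ (α : F) (r : R), polyFun b p (α • r) = α ^ n * polyFun b p r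
  mult : ∀ x y : R, polyFun b p (x * y) = polyFun b p x * polyFun b p y
  ch : ∀ a : R, Polynomial.aeval a (charPolyOf b p a) = 0

/-- The generic element `x = Σ xᵢ aᵢ` of `R ⊗ K`, `K` the rational function field. -/
noncomputable def genElt [Field F] [Ring R] [Algebra F R] [Fintype ι] (b : Module.Basis ι F R) :
    FractionRing (MvPolynomial ι F) ⊗[F] R :=
  ∑ i, algebraMap (MvPolynomial ι F) (FractionRing (MvPolynomial ι F)) (MvPolynomial.X i)
    ⊗ₜ[F] b i

open MvPolynomial Polynomial

theorem stdBasis_repr' {F : Type*} [Field F] {n : ℕ} (M : Matrix (Fin n) (Fin n) F)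
    (ij : Fin n × Fin n) : (Matrix.stdBasis F (Fin n) (Fin n)).repr M ij = M ij.1 ij.2 := by
  obtain ⟨i, j⟩ := ij
  simp [Matrix.stdBasis, Module.Basis.map_repr, Pi.basis_repr, Pi.basisFun_repr]

theorem polyFun_eq {F : Type*} [Field F] {n : ℕ} (q : MvPolynomial (Fin n × Fin n) F)
    (M : Matrix (Fin n) (Fin n) F) :
    polyFun (Matrix.stdBasis F (Fin n) (Fin n)) q M
      = MvPolynomial.eval (fun ij => M ij.1 ij.2) q := by
  unfold polyFun
  simp only [stdBasis_repr']

-- coeff 0 of charPolyOf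
theorem charPolyOf_coeff_zero {F : Type*} [Field F] {n : ℕ} (N : MvPolynomial (Fin n × Fin n) F)
    (M : Matrix (Fin n) (Fin n) F) :
    (charPolyOf (Matrix.stdBasis F (Fin n) (Fin n)) N M).coeff 0
      = polyFun (Matrix.stdBasis F (Fin n) (Fin n)) N (-M) := by
  rw [Polynomial.coeff_zero_eq_eval_zero, charPolyOf]
  have : (Polynomial.aeval (0 : F)).comp (MvPolynomial.aeval
      (fun i : Fin n × Fin n => Polynomial.C ((Matrix.stdBasis F (Fin n) (Fin n)).repr 1 i) * Polynomial.X
        - Polynomial.C ((Matrix.stdBasis F (Fin n) (Fin n)).repr M i)))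
      = MvPolynomial.aeval (fun i => - ((Matrix.stdBasis F (Fin n) (Fin n)).repr M i)) := by
    apply MvPolynomial.algHom_ext
    intro i
    simp
  have h2 := congrArg (fun (f : MvPolynomial (Fin n × Fin n) F →ₐ[F] F) => f N) this
  simp only [AlgHom.comp_apply] at h2
  rw [show Polynomial.eval (0:F) _ = Polynomial.aeval (0:F)
    ((MvPolynomial.aeval fun i => Polynomial.C ((Matrix.stdBasis F (Fin n) (Fin n)).repr 1 i) * Polynomial.X
        - Polynomial.C ((Matrix.stdBasis F (Fin n) (Fin n)).repr M i)) N) from by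
      simp [Polynomial.aeval_def, Polynomial.eval], h2]
  unfold polyFun
  rw [MvPolynomial.aeval_def, MvPolynomial.eval]
  simp only [map_neg]
  rfl

theorem nu_vanish {F : Type*} [Field F] {n k : ℕ} (hn : 0 < n)
    {N : MvPolynomial (Fin n × Fin n) F}
    (hN : IsCHNorm (Matrix.stdBasis F (Fin n) (Fin n)) k N)
    (M : Matrix (Fin n) (Fin n) F) (hdet : M.det = 0) :
    polyFun (Matrix.stdBasis F (Fin n) (Fin n)) N M = 0 := by
  set b := Matrix.stdBasis F (Fin n) (Fin n)
  set χ := charPolyOf b N M with hχ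
  have hch : Polynomial.aeval M χ = 0 := hN.ch M
  have hdecomp : χ = Polynomial.X * χ.divX + Polynomial.C (χ.coeff 0) :=
    (Polynomial.X_mul_divX_add χ).symm
  have h0 : χ.coeff 0 = (-1 : F) ^ k * polyFun b N M := by
    rw [hχ, charPolyOf_coeff_zero, show (-M) = (-1 : F) • M by simp, hN.homog]
  have key : ((-1 : F) ^ k * polyFun b N M) • (1 : Matrix (Fin n) (Fin n) F)
      = M * (-(Polynomial.aeval M χ.divX)) := by
    have := congrArg (Polynomial.aeval M) hdecomp
    rw [hch, map_add, map_mul, Polynomial.aeval_X, Polynomial.aeval_C, h0] at this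
    rw [Algebra.algebraMap_eq_smul_one] at this
    linear_combination (norm := noncomm_ring) -this
  have hd := congrArg Matrix.det key
  rw [Matrix.det_smul, Matrix.det_one, Matrix.det_mul, hdet, zero_mul, mul_one] at hd
  rw [Fintype.card_fin] at hd
  have : (-1 : F) ^ k * polyFun b N M = 0 := pow_eq_zero_iff hn.ne' |>.mp hd
  have hu : ((-1 : F) ^ k) ≠ 0 := pow_ne_zero _ (by norm_num)
  exact (mul_eq_zero.mp this).resolve_left hu

open MvPolynomial Polynomial

noncomputable def detP (F : Type*) [Field F] (n : ℕ) : MvPolynomial (Fin n × Fin n) F :=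
  (Matrix.mvPolynomialX (Fin n) (Fin n) F).det

theorem eval_detP {F : Type*} [Field F] {n : ℕ} (φ : Fin n × Fin n → F) :
    MvPolynomial.eval φ (detP F n) = (Matrix.of fun i j => φ (i, j)).det := by
  rw [detP, RingHom.map_det]
  congr 1
  ext i j
  simp [Matrix.mvPolynomialX]

theorem charmatrix_detP {F : Type*} [Field F] {n : ℕ} (M : Matrix (Fin n) (Fin n) F) :
    (MvPolynomial.aeval
      (fun ij : Fin n × Fin n => Polynomial.C ((1 : Matrix (Fin n) (Fin n) F) ij.1 ij.2) * Polynomial.X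
        - Polynomial.C (M ij.1 ij.2)) (detP F n)) = M.charpoly := by
  rw [detP, AlgHom.map_det, Matrix.charpoly]
  congr 1
  ext i j
  by_cases h : i = j <;>
    simp [Matrix.charmatrix, Matrix.mvPolynomialX, Matrix.one_apply, h, Matrix.diagonal]

namespace CHAux
open MvPolynomial

variable (F : Type*) [Field F] {n : ℕ}

noncomputable def tau (w : Fin n × Fin n) :
    MvPolynomial (Fin n × Fin n) F ≃ₐ[F]
      Polynomial (MvPolynomial {u : Fin n × Fin n // u ≠ w} F) :=
  (MvPolynomial.renameEquiv F (Equiv.optionSubtypeNe w).symm).trans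
    (MvPolynomial.optionEquivLeft F _)

variable {F}

lemma tau_X_self (w : Fin n × Fin n) : tau F w (X w) = Polynomial.X := by
  simp [tau, Equiv.optionSubtypeNe_symm_self, optionEquivLeft_X_none]

lemma tau_X_ne (w u : Fin n × Fin n) (h : u ≠ w) :
    tau F w (X u) = Polynomial.C (X ⟨u, h⟩) := by
  simp [tau, Equiv.optionSubtypeNe_symm_of_ne h, optionEquivLeft_X_some]

lemma tau_rename (w : Fin n × Fin n) (f : MvPolynomial {u : Fin n × Fin n // u ≠ w} F) :
    tau F w (rename Subtype.val f) = Polynomial.C f := by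
  have : ((tau F w).toAlgHom.comp (rename (Subtype.val : {u : Fin n × Fin n // u ≠ w} → _)))
      = IsScalarTower.toAlgHom F (MvPolynomial {u : Fin n × Fin n // u ≠ w} F) _ := by
    apply MvPolynomial.algHom_ext
    intro u
    simp only [AlgHom.comp_apply, rename_X, AlgEquiv.toAlgHom_eq_coe, AlgHom.coe_coe,
      IsScalarTower.coe_toAlgHom', MvPolynomial.algebraMap_eq]
    erw [tau_X_ne w u.1 u.2]
    simp [Polynomial.algebraMap_eq]
  exact congrArg (fun (g : MvPolynomial {u : Fin n × Fin n // u ≠ w} F →ₐ[F] _) => g f) this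

noncomputable def fullPt (w : Fin n × Fin n) (pt : {u : Fin n × Fin n // u ≠ w} → F) (t : F) :
    Fin n × Fin n → F :=
  fun u => if h : u = w then t else pt ⟨u, h⟩

lemma eval_tau (w : Fin n × Fin n) (pt : {u : Fin n × Fin n // u ≠ w} → F) (t : F)
    (f : MvPolynomial (Fin n × Fin n) F) :
    MvPolynomial.eval (fullPt w pt t) f
      = Polynomial.eval t ((tau F w f).map (MvPolynomial.eval pt)) := by
  have : (MvPolynomial.eval (fullPt w pt t))
      = (Polynomial.evalRingHom t).comp ((Polynomial.mapRingHom (MvPolynomial.eval pt)).comp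
          (tau F w).toAlgHom.toRingHom) := by
    apply MvPolynomial.ringHom_ext
    · intro a
      simp only [MvPolynomial.eval_C, RingHom.comp_apply]
      rw [show (MvPolynomial.C a : MvPolynomial (Fin n × Fin n) F) = algebraMap F _ a from rfl]
      rw [show (tau F w).toAlgHom.toRingHom (algebraMap F _ a) = algebraMap F _ a from
        (tau F w).commutes a]
      simp [Polynomial.algebraMap_eq, MvPolynomial.algebraMap_eq]
    · intro u
      by_cases h : u = w
      · subst h
        simp [fullPt, tau_X_self]
      · simp only [RingHom.comp_apply]
        rw [show (tau F w).toAlgHom.toRingHom (X u)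
          = Polynomial.C (X ⟨u, h⟩) from tau_X_ne w u h]
        simp [fullPt, h]
  exact congrArg (fun (g : MvPolynomial (Fin n × Fin n) F →+* F) => g f) this

end CHAux

namespace CHAux
open MvPolynomial

variable {F : Type*} [Field F] {n : ℕ}

def Missing (w : Fin n × Fin n) (f : MvPolynomial (Fin n × Fin n) F) : Prop :=
  ∃ c, tau F w f = Polynomial.C c

lemma missing_of_avoid {α : Type*} (w : Fin n × Fin n) (g : α → Fin n × Fin n)
    (hg : ∀ p, g p ≠ w) (f₀ : MvPolynomial α F) : Missing w (rename g f₀) := by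
  refine ⟨rename (fun p => (⟨g p, hg p⟩ : {u : Fin n × Fin n // u ≠ w})) f₀, ?_⟩
  rw [show (rename g f₀ : MvPolynomial (Fin n × Fin n) F)
    = rename Subtype.val (rename (fun p => (⟨g p, hg p⟩ : {u : Fin n × Fin n // u ≠ w})) f₀)
    from by rw [rename_rename]; rfl]
  exact tau_rename w _

lemma missing_trans (w : Fin n × Fin n) {q f : MvPolynomial (Fin n × Fin n) F}
    (hdvd : q ∣ f) (hf : f ≠ 0) (hm : Missing w f) : Missing w q := by
  obtain ⟨u, rfl⟩ := hdvd
  obtain ⟨c, hc⟩ := hm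
  have hq : q ≠ 0 := fun h => hf (by simp [h])
  have hu : u ≠ 0 := fun h => hf (by simp [h])
  have hq' : tau F w q ≠ 0 := fun h => hq (by
    have := (tau F w).injective (h.trans (map_zero (tau F w)).symm); simpa using this)
  have hu' : tau F w u ≠ 0 := fun h => hu (by
    have := (tau F w).injective (h.trans (map_zero (tau F w)).symm); simpa using this)
  have hmul : tau F w (q * u) = tau F w q * tau F w u := map_mul _ _ _
  have hdeg : (tau F w q).natDegree = 0 := by
    have := congrArg Polynomial.natDegree (hmul.symm.trans hc)
    rw [Polynomial.natDegree_mul hq' hu', Polynomial.natDegree_C] at this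
    omega
  obtain ⟨c', hc'⟩ := Polynomial.natDegree_eq_zero.mp hdeg
  exact ⟨c', hc'.symm⟩

lemma eq_rename_of_missing (w : Fin n × Fin n) {q : MvPolynomial (Fin n × Fin n) F}
    (hm : Missing w q) :
    ∃ c : MvPolynomial {u : Fin n × Fin n // u ≠ w} F,
      q = rename (Subtype.val : {u : Fin n × Fin n // u ≠ w} → _) c := by
  obtain ⟨c, hc⟩ := hm
  exact ⟨c, (tau F w).injective (by rw [hc, tau_rename])⟩

lemma isUnit_of_missing_all {q : MvPolynomial (Fin n × Fin n) F} (hq : q ≠ 0)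
    (h : ∀ w, Missing w q) : IsUnit q := by
  classical
  have hvars : q.vars = ∅ := by
    rw [Finset.eq_empty_iff_forall_notMem]
    intro w hw
    obtain ⟨c, rfl⟩ := eq_rename_of_missing w (h w)
    have := vars_rename (Subtype.val : {u : Fin n × Fin n // u ≠ w} → _) c hw
    simp only [Finset.mem_image] at this
    obtain ⟨⟨u, hu⟩, _, h2⟩ := this
    exact hu h2
  have hC : q = MvPolynomial.C (MvPolynomial.coeff 0 q) := by
    apply MvPolynomial.ext
    intro d
    by_cases hd : d = 0
    · simp [hd]
    · rw [MvPolynomial.coeff_C, if_neg (Ne.symm hd)]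
      by_contra hne
      have hd' : d ∈ q.support := by simpa [MvPolynomial.mem_support_iff] using hne
      obtain ⟨i, hi⟩ := Finsupp.support_nonempty_iff.mpr hd
      have : i ∈ q.vars := (mem_vars i).mpr ⟨d, hd', hi⟩
      simp [hvars] at this
  rw [hC]
  have : MvPolynomial.coeff 0 q ≠ 0 := fun h0 => hq (by rw [hC, h0, map_zero])
  exact (isUnit_iff_ne_zero.mpr this).map (C : F →+* MvPolynomial (Fin n × Fin n) F)

end CHAux

namespace CHAux
open MvPolynomial

variable {F : Type*} [Field F] {m : ℕ}

noncomputable def minorD (j : Fin (m + 1)) : MvPolynomial (Fin (m + 1) × Fin (m + 1)) F :=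
  rename (fun p : Fin m × Fin m => (p.1.succ, j.succAbove p.2)) (detP F m)

lemma minorD_eq (j : Fin (m + 1)) :
    (minorD j : MvPolynomial (Fin (m + 1) × Fin (m + 1)) F)
      = ((Matrix.mvPolynomialX (Fin (m+1)) (Fin (m+1)) F).submatrix Fin.succ j.succAbove).det := by
  rw [minorD, detP, AlgHom.map_det]
  congr 1
  ext a b
  simp [Matrix.mvPolynomialX]

lemma minorD_ne_zero (j : Fin (m + 1)) : (minorD j : MvPolynomial (Fin (m + 1) × Fin (m + 1)) F) ≠ 0 := by
  rw [minorD]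
  intro h
  have hinj : Function.Injective (fun p : Fin m × Fin m => (p.1.succ, j.succAbove p.2)) := by
    intro p q hpq
    simp only [Prod.mk.injEq] at hpq
    exact Prod.ext (Fin.succ_injective _ hpq.1) (j.succAbove_right_injective hpq.2)
  have := MvPolynomial.rename_injective _ hinj (h.trans (map_zero (rename _)).symm)
  exact Matrix.det_mvPolynomialX_ne_zero (Fin m) F this

lemma minorD_missing (j : Fin (m + 1)) (w : Fin (m+1) × Fin (m+1)) (hw : w.1 = 0 ∨ w.2 = j) :
    Missing w (minorD j : MvPolynomial (Fin (m + 1) × Fin (m + 1)) F) := by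
  apply missing_of_avoid
  intro p hp
  rcases hw with h | h
  · rw [← hp] at h
    exact Fin.succ_ne_zero p.1 h
  · rw [← hp] at h
    exact Fin.succAbove_ne j p.2 h

lemma detP_expansion :
    (detP F (m+1)) = ∑ j : Fin (m+1),
      (-1 : MvPolynomial (Fin (m+1) × Fin (m+1)) F) ^ (j : ℕ)
        * X (0, j) * minorD j := by
  rw [detP, Matrix.det_succ_row_zero]
  congr 1
  funext j
  rw [minorD_eq]
  simp [Matrix.mvPolynomialX]

lemma dvd_minorD {q : MvPolynomial (Fin (m+1) × Fin (m+1)) F}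
    (hdvd : q ∣ detP F (m+1)) (j : Fin (m+1)) (hm : Missing (0, j) q) :
    q ∣ (minorD j : MvPolynomial (Fin (m + 1) × Fin (m + 1)) F) := by
  classical
  obtain ⟨qb, hq⟩ := hm
  obtain ⟨cj, hcj⟩ := minorD_missing (F := F) j (0, j) (Or.inr rfl)
  have hC : Polynomial.C qb ∣ tau F (0, j) (detP F (m+1)) := by
    rw [← hq]; exact map_dvd (tau F (0, j)).toAlgHom.toRingHom hdvd
  have hcoeff : qb ∣ (tau F (0, j) (detP F (m+1))).coeff 1 :=
    (Polynomial.C_dvd_iff_dvd_coeff _ _).mp hC 1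
  have hcomp : (tau F (0, j) (detP F (m+1))).coeff 1
      = (-1 : MvPolynomial {u : Fin (m+1) × Fin (m+1) // u ≠ (0, j)} F) ^ (j : ℕ) * cj := by
    rw [detP_expansion, map_sum, Polynomial.finset_sum_coeff, Finset.sum_eq_single j]
    · rw [map_mul, map_mul, map_pow, map_neg, map_one, tau_X_self, hcj]
      rw [show ((-1 : Polynomial (MvPolynomial {u : Fin (m+1) × Fin (m+1) // u ≠ (0, j)} F)) ^ (j : ℕ)
            * Polynomial.X * Polynomial.C cj)
          = Polynomial.C ((-1) ^ (j : ℕ) * cj) * Polynomial.X from by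
        rw [map_mul, map_pow, map_neg, map_one]; ring]
      rw [Polynomial.coeff_C_mul, Polynomial.coeff_X_one, mul_one]
    · intro b _ hbj
      obtain ⟨cb, hcb⟩ := minorD_missing (F := F) b (0, j) (Or.inl rfl)
      have hne : ((0 : Fin (m+1)), b) ≠ ((0 : Fin (m+1)), j) := by
        simp [Prod.ext_iff, hbj]
      rw [map_mul, map_mul, map_pow, map_neg, map_one, tau_X_ne (F := F) _ _ hne, hcb]
      rw [show ((-1 : Polynomial (MvPolynomial {u : Fin (m+1) × Fin (m+1) // u ≠ (0, j)} F)) ^ (b : ℕ)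
            * Polynomial.C (X ⟨((0 : Fin (m+1)), b), hne⟩) * Polynomial.C cb)
          = Polynomial.C ((-1) ^ (b : ℕ) * X ⟨((0 : Fin (m+1)), b), hne⟩ * cb) from by
        rw [map_mul, map_mul, map_pow, map_neg, map_one]]
      rw [Polynomial.coeff_C, if_neg one_ne_zero]
    · intro h
      simp at h
  have hdvd2 : qb ∣ cj := by
    rw [hcomp] at hcoeff
    have : cj = (-1 : MvPolynomial {u : Fin (m+1) × Fin (m+1) // u ≠ (0, j)} F) ^ (j : ℕ)
        * ((-1) ^ (j : ℕ) * cj) := by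
      rw [← mul_assoc, ← pow_add, Even.neg_one_pow ⟨(j : ℕ), by ring⟩, one_mul]
    rw [this]
    exact Dvd.dvd.mul_left hcoeff _
  have : tau F (0, j) q ∣ tau F (0, j) (minorD j) := by
    rw [hq, hcj]
    exact map_dvd (Polynomial.C : _ →+* _) hdvd2
  have h2 := map_dvd (tau F (0, j)).symm.toAlgHom.toRingHom this
  simpa using h2

lemma isUnit_of_dvd_detP_missing {q : MvPolynomial (Fin (m+1) × Fin (m+1)) F}
    (hdvd : q ∣ detP F (m+1)) (h0 : Missing ((0 : Fin (m+1)), (0 : Fin (m+1))) q) : IsUnit q := by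
  have hq0 : q ≠ 0 := by
    rintro rfl
    exact Matrix.det_mvPolynomialX_ne_zero (Fin (m+1)) F (zero_dvd_iff.mp hdvd)
  have hminor0 : q ∣ (minorD 0 : MvPolynomial (Fin (m+1) × Fin (m+1)) F) :=
    dvd_minorD hdvd 0 h0
  have hrow0 : ∀ j : Fin (m+1), Missing ((0 : Fin (m+1)), j) q := by
    intro j
    exact missing_trans _ hminor0 (minorD_ne_zero 0)
      (minorD_missing 0 ((0 : Fin (m+1)), j) (Or.inl rfl))
  have hall : ∀ w : Fin (m+1) × Fin (m+1), Missing w q := by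
    intro ⟨i, j⟩
    have hmj : q ∣ (minorD j : MvPolynomial (Fin (m+1) × Fin (m+1)) F) :=
      dvd_minorD hdvd j (hrow0 j)
    exact missing_trans _ hmj (minorD_ne_zero j) (minorD_missing j (i, j) (Or.inr rfl))
  exact isUnit_of_missing_all hq0 hall

lemma isPrimitive_tau_detP :
    (tau F ((0 : Fin (m+1)), (0 : Fin (m+1))) (detP F (m+1))).IsPrimitive := by
  intro r hr
  have hdvd : (tau F ((0 : Fin (m+1)), (0 : Fin (m+1)))).symm (Polynomial.C r) ∣ detP F (m+1) := by
    have := map_dvd (tau F ((0 : Fin (m+1)), (0 : Fin (m+1)))).symm.toAlgHom.toRingHom hr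
    simpa using this
  have hmiss : Missing ((0 : Fin (m+1)), (0 : Fin (m+1)))
      ((tau F ((0 : Fin (m+1)), (0 : Fin (m+1)))).symm (Polynomial.C r)) := ⟨r, by simp⟩
  have hu := isUnit_of_dvd_detP_missing hdvd hmiss
  have h2 : IsUnit (Polynomial.C r) := by
    have := hu.map (tau F ((0 : Fin (m+1)), (0 : Fin (m+1)))).toAlgHom.toRingHom
    simpa using this
  exact Polynomial.isUnit_C.mp h2

end CHAux

namespace CHAux
open MvPolynomial

variable {F : Type*} [Field F] {m : ℕ}

lemma natDegree_tau_detP :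
    (tau F ((0 : Fin (m+1)), (0 : Fin (m+1))) (detP F (m+1))).natDegree ≤ 1 := by
  classical
  rw [detP_expansion, map_sum]
  refine Polynomial.natDegree_sum_le_of_forall_le _ _ ?_
  intro j _
  rw [map_mul, map_mul]
  obtain ⟨cj, hcj⟩ := minorD_missing (F := F) j ((0 : Fin (m+1)), (0 : Fin (m+1))) (Or.inl rfl)
  set w0 : Fin (m+1) × Fin (m+1) := ((0 : Fin (m+1)), (0 : Fin (m+1))) with hw0
  have ha : (tau F w0 ((-1) ^ (j:ℕ))).natDegree = 0 := by
    rw [map_pow, map_neg, map_one,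
      show ((-1 : Polynomial (MvPolynomial {u : Fin (m+1) × Fin (m+1) // u ≠ w0} F))) ^ (j:ℕ)
        = Polynomial.C ((-1)^(j:ℕ)) from by simp]
    exact Polynomial.natDegree_C _
  have hx : (tau F w0 (X (0, j))).natDegree ≤ 1 := by
    by_cases hj : j = 0
    · subst hj
      rw [tau_X_self]
      exact le_of_eq Polynomial.natDegree_X
    · rw [tau_X_ne w0 (0, j) (by simp [hw0, Prod.ext_iff, hj])]
      simp
  have hm' : (tau F w0 (minorD j)).natDegree = 0 := by
    rw [hcj]; exact Polynomial.natDegree_C _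
  calc (tau F w0 ((-1) ^ (j:ℕ)) * tau F w0 (X (0, j)) * tau F w0 (minorD j)).natDegree
      ≤ (tau F w0 ((-1) ^ (j:ℕ)) * tau F w0 (X (0, j))).natDegree
          + (tau F w0 (minorD j)).natDegree := Polynomial.natDegree_mul_le
    _ ≤ (tau F w0 ((-1) ^ (j:ℕ))).natDegree + (tau F w0 (X (0, j))).natDegree
          + (tau F w0 (minorD j)).natDegree := by
        exact Nat.add_le_add_right Polynomial.natDegree_mul_le _
    _ ≤ 0 + 1 + 0 := by
        exact add_le_add (add_le_add (le_of_eq ha) hx) (le_of_eq hm')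
    _ = 1 := by omega

end CHAux

namespace CHAux
open MvPolynomial

variable {F : Type*} [Field F] [Infinite F] {m : ℕ}

noncomputable def ptId (m : ℕ) (F : Type*) [Field F] :
    {u : Fin (m+1) × Fin (m+1) // u ≠ ((0 : Fin (m+1)), (0 : Fin (m+1)))} → F :=
  fun u => if u.1.1 = u.1.2 then 1 else 0

lemma eval_fullPt_detP (pt : {u : Fin (m+1) × Fin (m+1) // u ≠ ((0 : Fin (m+1)), (0 : Fin (m+1)))} → F)
    (t : F) :
    Polynomial.eval t ((tau F ((0 : Fin (m+1)), (0 : Fin (m+1))) (detP F (m+1))).map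
        (MvPolynomial.eval pt))
      = (Matrix.of fun i j => fullPt ((0 : Fin (m+1)), (0 : Fin (m+1))) pt t (i, j)).det := by
  rw [← eval_tau, eval_detP]

lemma map_eval_ptId_detP :
    ((tau F ((0 : Fin (m+1)), (0 : Fin (m+1))) (detP F (m+1))).map
        (MvPolynomial.eval (ptId m F))) = Polynomial.X := by
  apply Polynomial.funext
  intro t
  rw [eval_fullPt_detP, Polynomial.eval_X]
  have : (Matrix.of fun i j => fullPt ((0 : Fin (m+1)), (0 : Fin (m+1))) (ptId m F) t (i, j))
      = Matrix.diagonal (fun i : Fin (m+1) => if i = 0 then t else (1 : F)) := by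
    ext i j
    by_cases hij : i = j
    · subst hij
      by_cases hi : i = 0
      · subst hi
        simp [fullPt, Matrix.diagonal]
      · have : ((i, i) : Fin (m+1) × Fin (m+1)) ≠ (0, 0) := by simp [Prod.ext_iff, hi]
        simp [fullPt, this, ptId, Matrix.diagonal, hi]
    · have h1 : ((i, j) : Fin (m+1) × Fin (m+1)) ≠ ((0 : Fin (m+1)), (0 : Fin (m+1))) := by
        intro hcon
        rw [Prod.mk.injEq] at hcon
        exact hij (hcon.1.trans hcon.2.symm)
      rw [Matrix.of_apply, Matrix.diagonal_apply_ne _ hij]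
      simp only [fullPt, dif_neg h1, ptId]
      simp [hij]
  rw [this, Matrix.det_diagonal]
  rw [show (∏ i : Fin (m+1), if i = 0 then t else (1:F)) = t from by
    rw [Finset.prod_ite_eq' Finset.univ (0 : Fin (m+1)) (fun _ => t)]; simp]

lemma coeff_one_detP_ne_zero :
    (tau F ((0 : Fin (m+1)), (0 : Fin (m+1))) (detP F (m+1))).coeff 1 ≠ 0 := by
  intro h
  have := congrArg (fun p => Polynomial.coeff p 1) (map_eval_ptId_detP (F := F) (m := m))
  simp only [Polynomial.coeff_map, Polynomial.coeff_X_one] at this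
  rw [h, map_zero] at this
  exact zero_ne_one this

end CHAux

namespace CHAux
open MvPolynomial

variable {F : Type*} [Field F] [Infinite F] {m : ℕ}

set_option maxHeartbeats 1000000 in
theorem detP_dvd {k : ℕ} {N : MvPolynomial (Fin (m+1) × Fin (m+1)) F}
    (hN : IsCHNorm (Matrix.stdBasis F (Fin (m+1)) (Fin (m+1))) k N) :
    detP F (m+1) ∣ N := by
  classical
  by_cases hN0 : N = 0
  · simp [hN0]
  set w0 : Fin (m+1) × Fin (m+1) := ((0 : Fin (m+1)), (0 : Fin (m+1))) with hw0
  set B := MvPolynomial {u : Fin (m+1) × Fin (m+1) // u ≠ w0} F with hB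
  set dP : Polynomial B := tau F w0 (detP F (m+1)) with hdP
  set NP : Polynomial B := tau F w0 N with hNP
  set D : B := dP.coeff 1 with hD
  set E : B := dP.coeff 0 with hE
  have hdeg1 : dP.natDegree ≤ 1 := natDegree_tau_detP
  have hdPeq : dP = Polynomial.C D * Polynomial.X + Polynomial.C E :=
    Polynomial.eq_X_add_C_of_natDegree_le_one hdeg1
  have hDne : D ≠ 0 := coeff_one_detP_ne_zero
  set M : ℕ := NP.natDegree with hM
  set G : B := ∑ i ∈ Finset.range (M+1), NP.coeff i * (-E)^i * D^(M+1-i) with hG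
  -- G = 0 by evaluation at all points
  have hG0 : G = 0 := by
    apply MvPolynomial.funext
    intro pt
    rw [map_zero, hG, map_sum]
    by_cases hDpt : MvPolynomial.eval pt D = 0
    · apply Finset.sum_eq_zero
      intro i hi
      rw [Finset.mem_range] at hi
      rw [map_mul, map_pow, hDpt, zero_pow (by omega), mul_zero]
    · set t : F := -(MvPolynomial.eval pt E) / MvPolynomial.eval pt D with ht
      have hEt : -(MvPolynomial.eval pt E) = t * MvPolynomial.eval pt D := by
        rw [ht, div_mul_cancel₀ _ hDpt]
      -- the matrix at this point is singular
      have hMt : (Matrix.of fun i j => fullPt w0 pt t (i, j)).det = 0 := by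
        rw [← eval_detP, eval_tau w0 pt t, ← hdP, hdPeq]
        rw [Polynomial.map_add, Polynomial.map_mul, Polynomial.map_C, Polynomial.map_C,
          Polynomial.map_X, Polynomial.eval_add, Polynomial.eval_mul, Polynomial.eval_C,
          Polynomial.eval_C, Polynomial.eval_X]
        rw [mul_comm, ← hEt]
        ring
      have hnu : polyFun (Matrix.stdBasis F (Fin (m+1)) (Fin (m+1))) N
          (Matrix.of fun i j => fullPt w0 pt t (i, j)) = 0 :=
        nu_vanish (Nat.succ_pos m) hN _ hMt
      have hbridge : Polynomial.eval t (NP.map (MvPolynomial.eval pt)) = 0 := by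
        rw [hNP, ← eval_tau w0 pt t N]
        rw [← hnu, polyFun_eq]
        congr 1
      have hterm : ∀ i ∈ Finset.range (M+1),
          MvPolynomial.eval pt (NP.coeff i * (-E)^i * D^(M+1-i))
            = (MvPolynomial.eval pt (NP.coeff i) * t^i) * (MvPolynomial.eval pt D)^(M+1) := by
        intro i hi
        rw [Finset.mem_range] at hi
        rw [map_mul, map_mul, map_pow, map_pow, map_neg, hEt, mul_pow]
        have : (MvPolynomial.eval pt D)^i * (MvPolynomial.eval pt D)^(M+1-i)
            = (MvPolynomial.eval pt D)^(M+1) := by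
          rw [← pow_add]
          congr 1
          omega
        rw [← this]; ring
      rw [Finset.sum_congr rfl hterm, ← Finset.sum_mul]
      have hsum : (∑ i ∈ Finset.range (M+1), MvPolynomial.eval pt (NP.coeff i) * t^i)
          = Polynomial.eval t (NP.map (MvPolynomial.eval pt)) := by
        rw [Polynomial.eval_eq_sum_range'
          (lt_of_le_of_lt Polynomial.natDegree_map_le (Nat.lt_succ_self M))]
        exact Finset.sum_congr rfl fun i _ => by rw [Polynomial.coeff_map]
      rw [hsum, hbridge, zero_mul]
  -- pass to fraction field
  letI : NormalizationMonoid B := UniqueFactorizationMonoid.normalizationMonoid.toNormalizationMonoid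
  letI : NormalizedGCDMonoid B := UniqueFactorizationMonoid.toNormalizedGCDMonoid B
  set L := FractionRing B with hL
  set θ : B →+* L := algebraMap B L with hθ
  have hθD : θ D ≠ 0 := fun h => hDne (IsFractionRing.injective B L (h.trans (map_zero θ).symm))
  set r : L := -(θ E) / θ D with hr
  have hrD : r * θ D = -(θ E) := div_mul_cancel₀ _ hθD
  have hroot : (NP.map θ).eval r = 0 := by
    have h1 := congrArg θ hG0
    rw [hG, map_sum, map_zero] at h1
    have h2 : ∀ i ∈ Finset.range (M+1),
        θ (NP.coeff i * (-E)^i * D^(M+1-i)) = (θ (NP.coeff i) * r^i) * (θ D)^(M+1) := by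
      intro i hi
      rw [Finset.mem_range] at hi
      rw [map_mul, map_mul, map_pow, map_pow, map_neg, ← hrD, mul_pow]
      have : (θ D)^i * (θ D)^(M+1-i) = (θ D)^(M+1) := by
        rw [← pow_add]; congr 1; omega
      rw [← this]; ring
    rw [Finset.sum_congr rfl h2, ← Finset.sum_mul] at h1
    have h3 := (mul_eq_zero.mp h1).resolve_right (pow_ne_zero _ hθD)
    rw [← h3, Polynomial.eval_eq_sum_range'
      (lt_of_le_of_lt Polynomial.natDegree_map_le (Nat.lt_succ_self M))]
    exact Finset.sum_congr rfl fun i _ => by rw [Polynomial.coeff_map]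
  have hlinfac : dP.map θ = Polynomial.C (θ D) * (Polynomial.X - Polynomial.C r) := by
    rw [hdPeq, Polynomial.map_add, Polynomial.map_mul, Polynomial.map_C, Polynomial.map_C,
      Polynomial.map_X]
    rw [mul_sub, ← Polynomial.C_mul, mul_comm (θ D) r, hrD, Polynomial.C_neg, sub_neg_eq_add]
  have hdvdL : dP.map θ ∣ NP.map θ := by
    rw [hlinfac]
    have hu : IsUnit (Polynomial.C (θ D)) :=
      Polynomial.isUnit_C.mpr (isUnit_iff_ne_zero.mpr hθD)
    obtain ⟨u, hu'⟩ := hu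
    rw [← hu', mul_comm, Units.mul_right_dvd]
    exact Polynomial.dvd_iff_isRoot.mpr hroot
  -- Gauss's lemma
  have hNPne : NP ≠ 0 := fun h => hN0 (by
    have := (tau F w0).injective (h.trans (map_zero (tau F w0)).symm)
    simpa [hNP] using this)
  have hcont : NP.content ≠ 0 := fun h => hNPne (Polynomial.content_eq_zero_iff.mp h)
  have hsplit : NP = Polynomial.C NP.content * NP.primPart := NP.eq_C_content_mul_primPart
  have hdvdLP : dP.map θ ∣ NP.primPart.map θ := by
    have : NP.map θ = Polynomial.C (θ NP.content) * NP.primPart.map θ := by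
      rw [hsplit, Polynomial.map_mul, Polynomial.map_C]
      rw [← hsplit]
    rw [this] at hdvdL
    have hu : IsUnit (Polynomial.C (θ NP.content)) :=
      Polynomial.isUnit_C.mpr (isUnit_iff_ne_zero.mpr
        (fun h => hcont (IsFractionRing.injective B L (h.trans (map_zero θ).symm))))
    obtain ⟨u, hu'⟩ := hu
    rwa [← hu', Units.dvd_mul_left] at hdvdL
  have hdvdB : dP ∣ NP.primPart :=
    (isPrimitive_tau_detP (F := F) (m := m)).dvd_of_fraction_map_dvd_fraction_map
      hdvdLP
  have hdvdNP : dP ∣ NP := hdvdB.trans (NP.primPart_dvd)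
  have := map_dvd (tau F w0).symm.toAlgHom.toRingHom hdvdNP
  simpa [hdP, hNP] using this

end CHAux

namespace CHAux
open MvPolynomial

variable {F : Type*} [Field F] [Infinite F] {n : ℕ}

noncomputable def prodS (F : Type*) [Field F] (n : ℕ) :
    MvPolynomial (Fin n × Fin n) F →ₐ[F]
      MvPolynomial ((Fin n × Fin n) ⊕ (Fin n × Fin n)) F :=
  aeval (fun ij : Fin n × Fin n =>
    ∑ l : Fin n, X (Sum.inl (ij.1, l)) * X (Sum.inr (l, ij.2)))

lemma eval_prodS (φ : (Fin n × Fin n) ⊕ (Fin n × Fin n) → F)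
    (f : MvPolynomial (Fin n × Fin n) F) :
    MvPolynomial.eval φ (prodS F n f)
      = MvPolynomial.eval (fun ij : Fin n × Fin n =>
          ((Matrix.of fun i j => φ (Sum.inl (i, j))) *
            (Matrix.of fun i j => φ (Sum.inr (i, j)))) ij.1 ij.2) f := by
  have : (MvPolynomial.eval φ).comp (prodS F n).toRingHom
      = MvPolynomial.eval (fun ij : Fin n × Fin n =>
          ((Matrix.of fun i j => φ (Sum.inl (i, j))) *
            (Matrix.of fun i j => φ (Sum.inr (i, j)))) ij.1 ij.2) := by
    apply MvPolynomial.ringHom_ext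
    · intro a
      simp [prodS]
    · intro ij
      simp only [RingHom.comp_apply, AlgHom.toRingHom_eq_coe, RingHom.coe_coe]
      rw [show (prodS F n) (X ij) = ∑ l : Fin n, X (Sum.inl (ij.1, l)) * X (Sum.inr (l, ij.2))
        from aeval_X _ ij]
      rw [MvPolynomial.eval_X, Matrix.mul_apply]
      simp
  exact congrArg (fun (g : MvPolynomial (Fin n × Fin n) F →+* F) => g f) this

theorem mult_of_factor {k : ℕ} {N g : MvPolynomial (Fin n × Fin n) F}
    (hN : IsCHNorm (Matrix.stdBasis F (Fin n) (Fin n)) k N)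
    (hfac : N = detP F n * g) :
    ∀ X Y : Matrix (Fin n) (Fin n) F,
      polyFun (Matrix.stdBasis F (Fin n) (Fin n)) g (X * Y) =
        polyFun (Matrix.stdBasis F (Fin n) (Fin n)) g X *
          polyFun (Matrix.stdBasis F (Fin n) (Fin n)) g Y := by
  classical
  have hofeta : ∀ M : Matrix (Fin n) (Fin n) F, (Matrix.of fun i j => M i j) = M := fun _ => rfl
  have hval : ∀ M : Matrix (Fin n) (Fin n) F,
      polyFun (Matrix.stdBasis F (Fin n) (Fin n)) N M
        = M.det * polyFun (Matrix.stdBasis F (Fin n) (Fin n)) g M := by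
    intro M
    rw [polyFun_eq, hfac, map_mul, eval_detP, polyFun_eq]
    rfl
  have key : prodS F n (detP F n) * (prodS F n g - rename Sum.inl g * rename Sum.inr g) = 0 := by
    apply MvPolynomial.funext
    intro φ
    rw [map_zero, map_mul]
    set Xm : Matrix (Fin n) (Fin n) F := Matrix.of fun i j => φ (Sum.inl (i, j)) with hXm
    set Ym : Matrix (Fin n) (Fin n) F := Matrix.of fun i j => φ (Sum.inr (i, j)) with hYm
    have hPdet : MvPolynomial.eval φ (prodS F n (detP F n)) = (Xm * Ym).det := by
      rw [eval_prodS φ (detP F n), eval_detP]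
      exact congrArg Matrix.det (hofeta _)
    have hPg : MvPolynomial.eval φ (prodS F n g)
        = polyFun (Matrix.stdBasis F (Fin n) (Fin n)) g (Xm * Ym) := by
      rw [eval_prodS φ g, polyFun_eq]
    have hPl : MvPolynomial.eval φ (rename Sum.inl g)
        = polyFun (Matrix.stdBasis F (Fin n) (Fin n)) g Xm := by
      rw [MvPolynomial.eval_rename, polyFun_eq]
      rfl
    have hPr : MvPolynomial.eval φ (rename Sum.inr g)
        = polyFun (Matrix.stdBasis F (Fin n) (Fin n)) g Ym := by
      rw [MvPolynomial.eval_rename, polyFun_eq]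
      rfl
    by_cases hd : (Xm * Ym).det = 0
    · rw [hPdet, hd, zero_mul]
    · have hdX : Xm.det ≠ 0 := fun h => hd (by rw [Matrix.det_mul, h, zero_mul])
      have hdY : Ym.det ≠ 0 := fun h => hd (by rw [Matrix.det_mul, h, mul_zero])
      have hmult := hN.mult Xm Ym
      rw [hval (Xm * Ym), hval Xm, hval Ym] at hmult
      have h2 : polyFun (Matrix.stdBasis F (Fin n) (Fin n)) g (Xm * Ym)
          = polyFun (Matrix.stdBasis F (Fin n) (Fin n)) g Xm *
              polyFun (Matrix.stdBasis F (Fin n) (Fin n)) g Ym := by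
        apply mul_left_cancel₀ (mul_ne_zero hdX hdY)
        rw [Matrix.det_mul] at hmult
        linear_combination hmult
      rw [map_sub, map_mul, hPg, hPl, hPr, h2, sub_self, mul_zero]
  have hPne : prodS F n (detP F n) ≠ 0 := by
    intro h
    set φid : (Fin n × Fin n) ⊕ (Fin n × Fin n) → F :=
      Sum.elim (fun ij : Fin n × Fin n => if ij.1 = ij.2 then (1:F) else 0)
        (fun ij : Fin n × Fin n => if ij.1 = ij.2 then (1:F) else 0) with hφid
    have := congrArg (MvPolynomial.eval φid) h
    rw [map_zero, eval_prodS, eval_detP] at this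
    have hXid : (Matrix.of fun i j : Fin n => φid (Sum.inl (i, j)))
        = (1 : Matrix (Fin n) (Fin n) F) := by
      ext i j; simp [hφid, Matrix.one_apply]
    have hYid : (Matrix.of fun i j : Fin n => φid (Sum.inr (i, j)))
        = (1 : Matrix (Fin n) (Fin n) F) := by
      ext i j; simp [hφid, Matrix.one_apply]
    rw [show (Matrix.of fun i j : Fin n =>
          ((Matrix.of fun i j : Fin n => φid (Sum.inl (i, j))) *
            (Matrix.of fun i j : Fin n => φid (Sum.inr (i, j)))) i j)
        = ((Matrix.of fun i j : Fin n => φid (Sum.inl (i, j))) *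
            (Matrix.of fun i j : Fin n => φid (Sum.inr (i, j)))) from rfl,
      hXid, hYid, one_mul, Matrix.det_one] at this
    exact one_ne_zero this
  have hdiff : prodS F n g = rename Sum.inl g * rename Sum.inr g := by
    rcases mul_eq_zero.mp key with h | h
    · exact absurd h hPne
    · exact sub_eq_zero.mp h
  intro Xv Yv
  set φ : (Fin n × Fin n) ⊕ (Fin n × Fin n) → F :=
    Sum.elim (fun ij => Xv ij.1 ij.2) (fun ij => Yv ij.1 ij.2) with hφ
  have := congrArg (MvPolynomial.eval φ) hdiff
  rw [map_mul, eval_prodS, MvPolynomial.eval_rename, MvPolynomial.eval_rename] at this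
  rw [show (Matrix.of fun i j => φ (Sum.inl (i, j))) = Xv from rfl,
    show (Matrix.of fun i j => φ (Sum.inr (i, j))) = Yv from rfl] at this
  rw [polyFun_eq, polyFun_eq, polyFun_eq]
  exact this

end CHAux


/-- The determinant is the minimal CH-norm on the matrix algebra `Mₙ(F)` over an infinite
field `F`: it is a CH-norm of degree `n` and every CH-norm is a multiplicative polynomial
map times the determinant. -/
theorem stmt8 (F : Type*) [Field F] [Infinite F] (n : ℕ) :
    ∃ p : MvPolynomial (Fin n × Fin n) F,
      (∀ M : Matrix (Fin n) (Fin n) F,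
        polyFun (Matrix.stdBasis F (Fin n) (Fin n)) p M = M.det) ∧
      IsCHNorm (Matrix.stdBasis F (Fin n) (Fin n)) n p ∧
      ∀ (k : ℕ) (N : MvPolynomial (Fin n × Fin n) F),
        IsCHNorm (Matrix.stdBasis F (Fin n) (Fin n)) k N →
        ∃ g : MvPolynomial (Fin n × Fin n) F,
          (∀ X Y : Matrix (Fin n) (Fin n) F,
            polyFun (Matrix.stdBasis F (Fin n) (Fin n)) g (X * Y) =
              polyFun (Matrix.stdBasis F (Fin n) (Fin n)) g X *
                polyFun (Matrix.stdBasis F (Fin n) (Fin n)) g Y) ∧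
          ∀ M : Matrix (Fin n) (Fin n) F,
            polyFun (Matrix.stdBasis F (Fin n) (Fin n)) N M =
              polyFun (Matrix.stdBasis F (Fin n) (Fin n)) g M * M.det := by
  classical
  have h1 : ∀ M : Matrix (Fin n) (Fin n) F,
      polyFun (Matrix.stdBasis F (Fin n) (Fin n)) (detP F n) M = M.det := by
    intro M
    rw [polyFun_eq, eval_detP]
    rfl
  refine ⟨detP F n, h1, ⟨?_, ?_, ?_⟩, ?_⟩
  · intro α M
    rw [h1, h1, Matrix.det_smul, Fintype.card_fin]
  · intro X Y
    rw [h1, h1, h1, Matrix.det_mul]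
  · intro M
    have heq : charPolyOf (Matrix.stdBasis F (Fin n) (Fin n)) (detP F n) M = M.charpoly := by
      rw [charPolyOf, show (fun ij : Fin n × Fin n =>
          Polynomial.C ((Matrix.stdBasis F (Fin n) (Fin n)).repr 1 ij) * Polynomial.X
            - Polynomial.C ((Matrix.stdBasis F (Fin n) (Fin n)).repr M ij))
          = (fun ij : Fin n × Fin n =>
          Polynomial.C ((1 : Matrix (Fin n) (Fin n) F) ij.1 ij.2) * Polynomial.X
            - Polynomial.C (M ij.1 ij.2)) from by
        funext ij
        rw [stdBasis_repr', stdBasis_repr']]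
      exact charmatrix_detP M
    rw [heq]
    exact Matrix.aeval_self_charpoly M
  · intro k N hN
    cases n with
    | zero =>
        refine ⟨N, hN.mult, ?_⟩
        intro M
        rw [Matrix.det_fin_zero, mul_one]
    | succ m =>
        obtain ⟨g, hg⟩ := CHAux.detP_dvd hN
        refine ⟨g, CHAux.mult_of_factor hN hg, ?_⟩
        intro M
        rw [polyFun_eq, hg, map_mul, eval_detP, polyFun_eq,
          show (Matrix.of fun i j => M i j) = M from rfl, mul_comm]
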